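/- Fix A > 0 and a wavenumber α > 0, and for B > 0 set κ_α(B) := √(α² + B), λ*_α(B) := (α²A/2)·(κ_α(B)²/B)·[1 − tanh(κ_α(B))/κ_α(B)]^{−1}, and h_α*(B;x) := (λ*_α(B)·B/(α²κ_α(B)²))·[1 − cosh(κ_α(B)·x)/cosh(κ_α(B))]. Then for every x ∈ (−1,1), h_α*(B;x) → A/2 as B → ∞. -/

import Mathlib

/-- `κ_α(B) = √(α² + B)`. -/
noncomputable def kappaAlpha (α B : ℝ) : ℝ := Real.sqrt (α ^ 2 + B)

/-- The squared maximal sloshing frequency `λ*_α(B)` for wavenumber `α > 0`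
with surface tension. -/
noncomputable def lamStarAlpha (A α B : ℝ) : ℝ :=
  (α ^ 2 * A / 2) * (kappaAlpha α B ^ 2 / B) *
    (1 - Real.tanh (kappaAlpha α B) / kappaAlpha α B)⁻¹

/-- The optimal shallow canal cross-section `h_α*(B; x)` for wavenumber `α > 0`
with surface tension. -/
noncomputable def hStarAlpha (A α B x : ℝ) : ℝ :=
  lamStarAlpha A α B * B / (α ^ 2 * kappaAlpha α B ^ 2) *
    (1 - Real.cosh (kappaAlpha α B * x) / Real.cosh (kappaAlpha α B))

lemma tanh_div_tendsto : Filter.Tendsto (fun k : ℝ => Real.tanh k / k)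
    Filter.atTop (nhds 0) := by
  have h0 : Filter.Tendsto (fun k : ℝ => k⁻¹) Filter.atTop (nhds 0) :=
    tendsto_inv_atTop_zero
  refine squeeze_zero' ?_ ?_ h0
  · filter_upwards [Filter.eventually_ge_atTop (0:ℝ)] with k hk
    have h1 : 0 ≤ Real.sinh k := by
      have := Real.sinh_le_sinh.2 hk
      simpa using this
    have h2 : 0 < Real.cosh k := Real.cosh_pos k
    rw [Real.tanh_eq_sinh_div_cosh]
    positivity
  · filter_upwards [Filter.eventually_ge_atTop (0:ℝ)] with k hk
    have h2 : 0 < Real.cosh k := Real.cosh_pos k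
    have h3 : Real.tanh k ≤ 1 := by
      rw [Real.tanh_eq_sinh_div_cosh, div_le_one h2]
      exact (Real.sinh_lt_cosh k).le
    rcases eq_or_lt_of_le hk with rfl | hk'
    · simp
    · rw [div_le_iff₀ hk', inv_mul_cancel₀ hk'.ne']
      exact h3

lemma cosh_ratio_tendsto {x : ℝ} (hx : |x| < 1) :
    Filter.Tendsto (fun k : ℝ => Real.cosh (k * x) / Real.cosh k)
    Filter.atTop (nhds 0) := by
  have hexp : Filter.Tendsto (fun k : ℝ => 2 * Real.exp (k * (|x| - 1)))
      Filter.atTop (nhds 0) := by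
    have : Filter.Tendsto (fun k : ℝ => k * (|x| - 1)) Filter.atTop Filter.atBot := by
      apply Filter.Tendsto.atTop_mul_const_of_neg (by linarith) Filter.tendsto_id
    simpa using (Real.tendsto_exp_atBot.comp this).const_mul 2
  refine squeeze_zero' ?_ ?_ hexp
  · filter_upwards with k
    exact div_nonneg (Real.cosh_pos _).le (Real.cosh_pos _).le
  · filter_upwards [Filter.eventually_ge_atTop (0:ℝ)] with k hk
    have hck : 0 < Real.cosh k := Real.cosh_pos k
    have h1 : Real.cosh (k * x) ≤ Real.exp (k * |x|) := by
      calc Real.cosh (k * x) = Real.cosh |k * x| := (Real.cosh_abs _).symm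
        _ = Real.cosh (k * |x|) := by rw [abs_mul, abs_of_nonneg hk]
        _ ≤ Real.exp (k * |x|) := by
            rw [Real.cosh_eq]
            have h := Real.exp_le_exp.2 (neg_le_self (by positivity : (0:ℝ) ≤ k * |x|))
            linarith
    have h2 : Real.exp k / 2 ≤ Real.cosh k := by
      rw [Real.cosh_eq]
      have := Real.exp_pos (-k)
      linarith
    calc Real.cosh (k * x) / Real.cosh k ≤ Real.exp (k * |x|) / (Real.exp k / 2) :=
          div_le_div₀ (by positivity) h1 (by positivity) h2
      _ = 2 * Real.exp (k * (|x| - 1)) := by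
          rw [div_div_eq_mul_div, mul_comm, mul_div_assoc, ← Real.exp_sub]
          ring_nf

lemma kappa_tendsto (α : ℝ) : Filter.Tendsto (fun B => kappaAlpha α B)
    Filter.atTop Filter.atTop := by
  have hs : Filter.Tendsto Real.sqrt Filter.atTop Filter.atTop := by
    apply Filter.tendsto_atTop_atTop.2
    intro b
    refine ⟨max 0 b ^ 2, fun a ha => (le_max_right 0 b).trans ?_⟩
    rw [← Real.sqrt_sq (le_max_left 0 b)]
    exact Real.sqrt_le_sqrt ha
  exact hs.comp (Filter.tendsto_atTop_add_const_left _ _ Filter.tendsto_id)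

theorem hStarAlpha_zero_surface_tension_limit (A α : ℝ) (hA : 0 < A) (hα : 0 < α)
    (x : ℝ) (hx : x ∈ Set.Ioo (-1 : ℝ) 1) :
    Filter.Tendsto (fun B => hStarAlpha A α B x) Filter.atTop (nhds (A / 2)) := by
  obtain ⟨hx1, hx2⟩ := hx
  have hxabs : |x| < 1 := abs_lt.2 ⟨hx1, hx2⟩
  -- the composed limit in terms of κ
  have hk : Filter.Tendsto (fun B => kappaAlpha α B) Filter.atTop Filter.atTop :=
    kappa_tendsto α
  have htanh : Filter.Tendsto (fun B => Real.tanh (kappaAlpha α B) / kappaAlpha α B)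
      Filter.atTop (nhds 0) := tanh_div_tendsto.comp hk
  have hcosh : Filter.Tendsto
      (fun B => Real.cosh (kappaAlpha α B * x) / Real.cosh (kappaAlpha α B))
      Filter.atTop (nhds 0) := (cosh_ratio_tendsto hxabs).comp hk
  have hmain : Filter.Tendsto (fun B =>
      (A / 2) * (1 - Real.tanh (kappaAlpha α B) / kappaAlpha α B)⁻¹ *
        (1 - Real.cosh (kappaAlpha α B * x) / Real.cosh (kappaAlpha α B)))
      Filter.atTop (nhds (A / 2)) := by
    have h1 : Filter.Tendsto (fun B =>
        (1 - Real.tanh (kappaAlpha α B) / kappaAlpha α B)⁻¹)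
        Filter.atTop (nhds 1) := by
      have := ((tendsto_const_nhds (x := (1:ℝ))).sub htanh).inv₀ (by norm_num)
      simpa using this
    have h2 : Filter.Tendsto (fun B =>
        1 - Real.cosh (kappaAlpha α B * x) / Real.cosh (kappaAlpha α B))
        Filter.atTop (nhds 1) := by
      simpa using (tendsto_const_nhds (x := (1:ℝ))).sub hcosh
    have := ((tendsto_const_nhds (x := A/2)).mul h1).mul h2
    simpa using this
  refine hmain.congr' ?_
  filter_upwards [Filter.eventually_gt_atTop (0:ℝ)] with B hB
  have hκpos : 0 < kappaAlpha α B := Real.sqrt_pos.2 (by positivity)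
  unfold hStarAlpha lamStarAlpha
  have hcoef : (α ^ 2 * A / 2) * (kappaAlpha α B ^ 2 / B) *
      (1 - Real.tanh (kappaAlpha α B) / kappaAlpha α B)⁻¹ * B /
      (α ^ 2 * kappaAlpha α B ^ 2) =
      A / 2 * (1 - Real.tanh (kappaAlpha α B) / kappaAlpha α B)⁻¹ := by
    generalize (1 - Real.tanh (kappaAlpha α B) / kappaAlpha α B)⁻¹ = T
    field_simp
  rw [hcoef]
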